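/- Let 1 ≤ m̌ < m, let N̂ = n^m̌ and M = n^{m−m̌} (so N = N̂·M), and let Π̂ be an N̂×N̂ Hermitian matrix with Π̂² = Π̂ (an orthogonal projection). Let C be a convex cone of N×N Hermitian matrices with I_Anti ⊆ C, and define the conditional set C_Π̂ := {G Hermitian N×N : (Π̂ ⊗ I_M)† G (Π̂ ⊗ I_M) ∈ C}, where ⊗ is the Kronecker product under the identification ℂ^N ≅ ℂ^N̂ ⊗ ℂ^M given by grouping the first m̌ and the last m−m̌ tensor factors. Then for every N×N Hermitian matrix G and all permutations τ_l, τ_r of {1,…,m−m̌}, the matrix G − sign(τ_l)·sign(τ_r)·(1/2)((I_N̂ ⊗ Q_{τ_l})† G (I_N̂ ⊗ Q_{τ_r}) + (I_N̂ ⊗ Q_{τ_r})† G (I_N̂ ⊗ Q_{τ_l})) belongs to C_Π̂. -/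

import Mathlib

open Matrix

/-- The permutation matrix `P_π` on the `m`-fold tensor power of `ℂ^n`, indexing
coordinates by functions `f : Fin m → Fin n`, with entries
`(P_π)_{f,g} = 1` if `g = f ∘ π⁻¹` and `0` otherwise. -/
def permMat (n m : ℕ) (π : Equiv.Perm (Fin m)) :
    Matrix (Fin m → Fin n) (Fin m → Fin n) ℂ :=
  Matrix.of fun f g => if g = f ∘ π.symm then 1 else 0

/-- The antisymmetrically permuted matrix
`A_{l,r}(G) = sign(π_l)·sign(π_r)·(1/2)(P_l† G P_r + P_r† G P_l)`. -/
noncomputable def antiPerm (n m : ℕ) (πl πr : Equiv.Perm (Fin m))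
    (G : Matrix (Fin m → Fin n) (Fin m → Fin n) ℂ) :
    Matrix (Fin m → Fin n) (Fin m → Fin n) ℂ :=
  (((Equiv.Perm.sign πl : ℤ) : ℂ) * ((Equiv.Perm.sign πr : ℤ) : ℂ)) •
    ((2 : ℂ)⁻¹ •
      ((permMat n m πl)ᴴ * G * permMat n m πr + (permMat n m πr)ᴴ * G * permMat n m πl))

/-- `I_Anti`: the set of matrices of the form `G - A_{l,r}(G)` with `G` Hermitian. -/
def IAnti (n m : ℕ) : Set (Matrix (Fin m → Fin n) (Fin m → Fin n) ℂ) :=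
  {A | ∃ (G : Matrix (Fin m → Fin n) (Fin m → Fin n) ℂ) (πl πr : Equiv.Perm (Fin m)),
      G.IsHermitian ∧ A = G - antiPerm n m πl πr G}

/-- The identification `ℂ^(n^m) ≅ ℂ^(n^mc) ⊗ ℂ^(n^(m-mc))` given by grouping the first
`mc` and the last `m - mc` tensor factors, at the level of coordinate indices. -/
def splitEquiv (n m mc : ℕ) (h : mc ≤ m) :
    (Fin m → Fin n) ≃ (Fin mc → Fin n) × (Fin (m - mc) → Fin n) :=
  ((Equiv.arrowCongr ((finCongr (Nat.add_sub_cancel' h)).symm.trans finSumFinEquiv.symm)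
      (Equiv.refl (Fin n))).trans (Equiv.sumArrowEquivProdArrow _ _ _))

/-- The Kronecker product `A ⊗ B` of an `n^mc × n^mc` matrix and an
`n^(m-mc) × n^(m-mc)` matrix, viewed as an `n^m × n^m` matrix under `splitEquiv`. -/
def embedKron (n m mc : ℕ) (h : mc ≤ m)
    (A : Matrix (Fin mc → Fin n) (Fin mc → Fin n) ℂ)
    (B : Matrix (Fin (m - mc) → Fin n) (Fin (m - mc) → Fin n) ℂ) :
    Matrix (Fin m → Fin n) (Fin m → Fin n) ℂ :=
  Matrix.reindex (splitEquiv n m mc h).symm (splitEquiv n m mc h).symm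
    (Matrix.kroneckerMap (· * ·) A B)

/-- Auxiliary index equivalence. -/
def idxEquiv (m mc : ℕ) (h : mc ≤ m) : Fin m ≃ (Fin mc ⊕ Fin (m - mc)) :=
  (finCongr (Nat.add_sub_cancel' h)).symm.trans finSumFinEquiv.symm

/-- The extension of a permutation of the last `m - mc` factors to all `m` factors. -/
def extPerm (m mc : ℕ) (h : mc ≤ m) (τ : Equiv.Perm (Fin (m - mc))) : Equiv.Perm (Fin m) :=
  (idxEquiv m mc h).symm.permCongr (Equiv.sumCongr (Equiv.refl (Fin mc)) τ)

lemma sign_extPerm (m mc : ℕ) (h : mc ≤ m) (τ : Equiv.Perm (Fin (m - mc))) :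
    Equiv.Perm.sign (extPerm m mc h τ) = Equiv.Perm.sign τ := by
  simp [extPerm, Equiv.Perm.sign_permCongr, Equiv.Perm.sign_sumCongr]

lemma embedKron_mul (n m mc : ℕ) (h : mc ≤ m)
    (A A' : Matrix (Fin mc → Fin n) (Fin mc → Fin n) ℂ)
    (B B' : Matrix (Fin (m - mc) → Fin n) (Fin (m - mc) → Fin n) ℂ) :
    embedKron n m mc h A B * embedKron n m mc h A' B' = embedKron n m mc h (A * A') (B * B') := by
  simp only [embedKron, Matrix.reindex_apply, Equiv.symm_symm, Matrix.submatrix_mul_equiv,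
    ← Matrix.mul_kronecker_mul]


lemma embedKron_conjTranspose (n m mc : ℕ) (h : mc ≤ m)
    (A : Matrix (Fin mc → Fin n) (Fin mc → Fin n) ℂ)
    (B : Matrix (Fin (m - mc) → Fin n) (Fin (m - mc) → Fin n) ℂ) :
    (embedKron n m mc h A B)ᴴ = embedKron n m mc h Aᴴ Bᴴ := by
  ext f g
  simp [embedKron, Matrix.conjTranspose_apply, Matrix.kroneckerMap_apply, mul_comm]

lemma embedKron_one_permMat (n m mc : ℕ) (h : mc ≤ m) (τ : Equiv.Perm (Fin (m - mc))) :
    embedKron n m mc h 1 (permMat n (m - mc) τ) = permMat n m (extPerm m mc h τ) := by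
  ext f g
  simp only [embedKron, Matrix.reindex_apply, Equiv.symm_symm, Matrix.submatrix_apply,
    Matrix.kroneckerMap_apply, permMat, Matrix.of_apply, Matrix.one_apply]
  have hsplit : ∀ x : Fin m → Fin n, splitEquiv n m mc h x =
      ((fun i => x ((idxEquiv m mc h).symm (Sum.inl i))),
       (fun j => x ((idxEquiv m mc h).symm (Sum.inr j)))) := fun x => rfl
  rw [hsplit, hsplit]
  have key : (g = f ∘ (extPerm m mc h τ).symm) ↔
      ((fun i => f ((idxEquiv m mc h).symm (Sum.inl i))) =
        (fun i => g ((idxEquiv m mc h).symm (Sum.inl i))) ∧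
      (fun j => g ((idxEquiv m mc h).symm (Sum.inr j))) =
        (fun j => f ((idxEquiv m mc h).symm (Sum.inr j))) ∘ τ.symm) := by
    have hπ : ∀ x : Fin m, (extPerm m mc h τ).symm x =
        (idxEquiv m mc h).symm ((Equiv.sumCongr (Equiv.refl (Fin mc)) τ).symm
          (idxEquiv m mc h x)) := fun x => rfl
    constructor
    · intro hgf
      subst hgf
      constructor
      · funext i
        simp [hπ, Function.comp]
      · funext j
        simp [hπ, Function.comp]
    · rintro ⟨h1, h2⟩
      funext x
      have hx : x = (idxEquiv m mc h).symm (idxEquiv m mc h x) := by simp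
      rw [hx]
      rcases hy : idxEquiv m mc h x with i | j
      · have := congrFun h1 i
        simp only [Function.comp_apply, hπ]
        simpa using this.symm
      · have := congrFun h2 j
        simp only [Function.comp_apply, hπ]
        simpa using this
  by_cases h1 : (fun i => f ((idxEquiv m mc h).symm (Sum.inl i))) =
      (fun i => g ((idxEquiv m mc h).symm (Sum.inl i))) <;>
    by_cases h2 : (fun j => g ((idxEquiv m mc h).symm (Sum.inr j))) =
      (fun j => f ((idxEquiv m mc h).symm (Sum.inr j))) ∘ τ.symm <;>
    simp [h1, h2, key]

/-- Updating preserves antisymmetric exchangeability: if `I_Anti ⊆ C` then the conditional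
set `C_Π̂ = {G Hermitian : (Π̂ ⊗ I)† G (Π̂ ⊗ I) ∈ C}` contains
`G - sign(τ_l)·sign(τ_r)·(1/2)((I ⊗ Q_{τ_l})† G (I ⊗ Q_{τ_r}) + (I ⊗ Q_{τ_r})† G (I ⊗ Q_{τ_l}))`
for every Hermitian `G` and all permutations `τ_l, τ_r` of the last `m - m̌` factors. -/
theorem conditional_anti_exchangeable (n m mc : ℕ) (hn : 1 ≤ n) (hmc : 1 ≤ mc)
    (hlt : mc < m)
    (Proj : Matrix (Fin mc → Fin n) (Fin mc → Fin n) ℂ)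
    (hProjHerm : Proj.IsHermitian) (hProjIdem : Proj * Proj = Proj)
    (C : Set (Matrix (Fin m → Fin n) (Fin m → Fin n) ℂ))
    (hHerm : ∀ A ∈ C, A.IsHermitian)
    (hAdd : ∀ A ∈ C, ∀ B ∈ C, A + B ∈ C)
    (hSMul : ∀ (c : ℝ), 0 ≤ c → ∀ A ∈ C, (c : ℂ) • A ∈ C)
    (hI : IAnti n m ⊆ C)
    (G : Matrix (Fin m → Fin n) (Fin m → Fin n) ℂ) (hG : G.IsHermitian)
    (τl τr : Equiv.Perm (Fin (m - mc))) :
    G - (((Equiv.Perm.sign τl : ℤ) : ℂ) * ((Equiv.Perm.sign τr : ℤ) : ℂ)) •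
        ((2 : ℂ)⁻¹ •
          ((embedKron n m mc hlt.le 1 (permMat n (m - mc) τl))ᴴ * G *
              embedKron n m mc hlt.le 1 (permMat n (m - mc) τr) +
            (embedKron n m mc hlt.le 1 (permMat n (m - mc) τr))ᴴ * G *
              embedKron n m mc hlt.le 1 (permMat n (m - mc) τl))) ∈
      {H : Matrix (Fin m → Fin n) (Fin m → Fin n) ℂ | H.IsHermitian ∧
        (embedKron n m mc hlt.le Proj 1)ᴴ * H * embedKron n m mc hlt.le Proj 1 ∈ C} := by
  set h := hlt.le
  set P := embedKron n m mc h Proj 1 with hP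
  set Ql := embedKron n m mc h 1 (permMat n (m - mc) τl) with hQl
  set Qr := embedKron n m mc h 1 (permMat n (m - mc) τr) with hQr
  set s : ℂ := ((Equiv.Perm.sign τl : ℤ) : ℂ) * ((Equiv.Perm.sign τr : ℤ) : ℂ) with hs
  have hstar : star s = s := by
    simp [hs]
  have hcomm : ∀ Q, (∃ τ, Q = embedKron n m mc h 1 (permMat n (m - mc) τ)) →
      Q * P = P * Q := by
    rintro Q ⟨τ, rfl⟩
    rw [embedKron_mul, embedKron_mul, one_mul, mul_one, one_mul, mul_one]
  have hcl : Ql * P = P * Ql := hcomm _ ⟨τl, rfl⟩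
  have hcr : Qr * P = P * Qr := hcomm _ ⟨τr, rfl⟩
  constructor
  · -- Hermitian
    unfold Matrix.IsHermitian
    simp only [Matrix.conjTranspose_sub, Matrix.conjTranspose_smul, Matrix.conjTranspose_add,
      Matrix.conjTranspose_mul, Matrix.conjTranspose_conjTranspose, hG.eq, hstar,
      star_inv₀]
    rw [add_comm ((embedKron n m mc h 1 (permMat n (m - mc) τl))ᴴ * G *
      embedKron n m mc h 1 (permMat n (m - mc) τr))]
    simp [Matrix.mul_assoc]
    rfl
  · -- membership in C
    set G' := Pᴴ * G * P with hG'
    have hG'herm : G'.IsHermitian := by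
      unfold Matrix.IsHermitian
      simp [hG', Matrix.conjTranspose_mul, hG.eq, Matrix.mul_assoc]
    have hswap : ∀ Qa Qb : Matrix (Fin m → Fin n) (Fin m → Fin n) ℂ,
        Qa * P = P * Qa → Qb * P = P * Qb →
        Pᴴ * (Qaᴴ * G * Qb) * P = Qaᴴ * G' * Qb := by
      intro Qa Qb ha hb
      calc Pᴴ * (Qaᴴ * G * Qb) * P = (Qa * P)ᴴ * G * (Qb * P) := by
            rw [Matrix.conjTranspose_mul]; simp only [Matrix.mul_assoc]
        _ = (P * Qa)ᴴ * G * (P * Qb) := by rw [ha, hb]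
        _ = Qaᴴ * G' * Qb := by
            rw [Matrix.conjTranspose_mul, hG']; simp only [Matrix.mul_assoc]
    have expand : Pᴴ * (G - s • ((2 : ℂ)⁻¹ • (Qlᴴ * G * Qr + Qrᴴ * G * Ql))) * P =
        G' - s • ((2 : ℂ)⁻¹ • (Qlᴴ * G' * Qr + Qrᴴ * G' * Ql)) := by
      rw [Matrix.mul_sub, Matrix.sub_mul, Matrix.mul_smul, Matrix.smul_mul,
        Matrix.mul_smul, Matrix.smul_mul, Matrix.mul_add, Matrix.add_mul,
        hswap Ql Qr hcl hcr, hswap Qr Ql hcr hcl]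
    rw [expand]
    apply hI
    refine ⟨G', extPerm m mc h τl, extPerm m mc h τr, hG'herm, ?_⟩
    rw [antiPerm, sign_extPerm, sign_extPerm, ← embedKron_one_permMat, ← embedKron_one_permMat,
      ← hQl, ← hQr, ← hs]
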